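/- For every real number R > 1 and every real number K < 2, there exist a complex Hilbert space H, a bounded invertible linear operator T on H with ‖T‖ ≤ R and ‖T^{-1}‖ ≤ R, and an integer n ≥ 1 such that ‖T^n + (T^{-1})^n‖ > K · (R^n + R^{-n}). Since R^n + R^{-n} = sup_{z ∈ A_R} |z^n + z^{-n}|, the annulus A_R is not a K-spectral set for such T when K < 2. -/

import Mathlib

/-- The closed annulus `A_R = {z : 1/R ≤ |z| ≤ R}`. -/
def annulus (R : ℝ) : Set ℂ := {z : ℂ | 1 / R ≤ ‖z‖ ∧ ‖z‖ ≤ R}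

/-- A weighted (cyclic) shift operator on `EuclideanSpace ℂ (ZMod N)`:
`(shiftCLM N c a x) j = a j * x (j + c)`. -/
noncomputable def shiftCLM (N : ℕ) [NeZero N] (c : ZMod N) (a : ZMod N → ℂ) :
    EuclideanSpace ℂ (ZMod N) →L[ℂ] EuclideanSpace ℂ (ZMod N) :=
  LinearMap.toContinuousLinearMap
  { toFun := fun x => (WithLp.toLp 2 (fun j => a j * x (j + c)) : EuclideanSpace ℂ (ZMod N))
    map_add' := by
      intro x y; ext j
      simp [PiLp.add_apply, mul_add]
    map_smul' := by
      intro m x; ext j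
      simp [PiLp.smul_apply, smul_eq_mul]; ring }

lemma shiftCLM_apply (N : ℕ) [NeZero N] (c : ZMod N) (a : ZMod N → ℂ)
    (x : EuclideanSpace ℂ (ZMod N)) (j : ZMod N) :
    shiftCLM N c a x j = a j * x (j + c) := rfl

lemma shiftCLM_single (N : ℕ) [NeZero N] (c : ZMod N) (a : ZMod N → ℂ)
    (k : ZMod N) (v : ℂ) :
    shiftCLM N c a (EuclideanSpace.single k v)
      = EuclideanSpace.single (k - c) (a (k - c) * v) := by
  ext j
  rw [shiftCLM_apply]
  simp only [EuclideanSpace.single_apply]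
  by_cases h : j = k - c
  · subst h
    rw [if_pos rfl, if_pos (by ring)]
  · rw [if_neg h, if_neg (by intro hc; exact h (by rw [← hc]; ring)), mul_zero]

lemma shiftCLM_norm_le (N : ℕ) [NeZero N] (c : ZMod N) (a : ZMod N → ℂ)
    (C : ℝ) (hC : 0 ≤ C) (ha : ∀ j, ‖a j‖ ≤ C) : ‖shiftCLM N c a‖ ≤ C := by
  refine ContinuousLinearMap.opNorm_le_bound _ hC (fun x => ?_)
  rw [EuclideanSpace.norm_eq, EuclideanSpace.norm_eq x]
  rw [show C * Real.sqrt (∑ i : ZMod N, ‖x i‖ ^ 2)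
      = Real.sqrt (C ^ 2 * ∑ i : ZMod N, ‖x i‖ ^ 2) by
    rw [Real.sqrt_mul (sq_nonneg C), Real.sqrt_sq hC]]
  apply Real.sqrt_le_sqrt
  have hre : (∑ j : ZMod N, ‖x (j + c)‖ ^ 2) = ∑ i : ZMod N, ‖x i‖ ^ 2 :=
    Fintype.sum_equiv (Equiv.addRight c) _ _ (fun j => rfl)
  calc ∑ j : ZMod N, ‖shiftCLM N c a x j‖ ^ 2
      ≤ ∑ j : ZMod N, C ^ 2 * ‖x (j + c)‖ ^ 2 := by
        apply Finset.sum_le_sum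
        intro j _
        rw [shiftCLM_apply, norm_mul, mul_pow]
        exact mul_le_mul_of_nonneg_right
          (pow_le_pow_left₀ (norm_nonneg _) (ha j) 2) (sq_nonneg _)
    _ = C ^ 2 * ∑ i : ZMod N, ‖x i‖ ^ 2 := by rw [← Finset.mul_sum, hre]

/-- The weights: `R` on the first half of `ZMod (2n)`, `R⁻¹` on the second half. -/
noncomputable def wgt (R : ℝ) (n : ℕ) : ZMod (2 * n) → ℂ :=
  fun k => if (ZMod.val k) < n then (R : ℂ) else (R : ℂ)⁻¹

lemma wgt_ne_zero (R : ℝ) (hR : 1 < R) (n : ℕ) (k : ZMod (2 * n)) : wgt R n k ≠ 0 := by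
  have hR0 : (R : ℂ) ≠ 0 := by
    simp only [ne_eq, Complex.ofReal_eq_zero]; intro h; rw [h] at hR; linarith
  unfold wgt; split_ifs
  · exact hR0
  · exact inv_ne_zero hR0

lemma wgt_norm_le (R : ℝ) (hR : 1 < R) (n : ℕ) (k : ZMod (2 * n)) : ‖wgt R n k‖ ≤ R := by
  have h0 : (0:ℝ) < R := by linarith
  unfold wgt; split_ifs
  · rw [Complex.norm_real, Real.norm_eq_abs, abs_of_pos h0]
  · rw [norm_inv, Complex.norm_real, Real.norm_eq_abs, abs_of_pos h0]
    calc R⁻¹ ≤ 1 := by rw [inv_le_one_iff₀]; right; linarith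
    _ ≤ R := by linarith

lemma wgt_inv_norm_le (R : ℝ) (hR : 1 < R) (n : ℕ) (k : ZMod (2 * n)) :
    ‖(wgt R n k)⁻¹‖ ≤ R := by
  have h0 : (0:ℝ) < R := by linarith
  unfold wgt; split_ifs
  · rw [norm_inv, Complex.norm_real, Real.norm_eq_abs, abs_of_pos h0]
    calc R⁻¹ ≤ 1 := by rw [inv_le_one_iff₀]; right; linarith
    _ ≤ R := by linarith
  · rw [inv_inv, Complex.norm_real, Real.norm_eq_abs, abs_of_pos h0]

set_option maxHeartbeats 1000000 in
/-- For every `R > 1` and every `K < 2` there exist a complex Hilbert space `H`,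
a bounded invertible operator `T` on `H` with `‖T‖ ≤ R` and `‖T⁻¹‖ ≤ R`, and an
integer `n ≥ 1` with `‖Tⁿ + (T⁻¹)ⁿ‖ > K (Rⁿ + R⁻ⁿ)`.  Since
`Rⁿ + R⁻ⁿ = sup_{z ∈ A_R} |zⁿ + z⁻ⁿ|`, the annulus `A_R` is not a `K`-spectral
set for such `T` when `K < 2`. -/
theorem annulus_not_K_spectral_of_lt_two (R : ℝ) (hR : 1 < R) (K : ℝ) (hK : K < 2) :
    ∃ (H : Type) (_ : NormedAddCommGroup H) (_ : InnerProductSpace ℂ H) (_ : CompleteSpace H)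
      (T Tinv : H →L[ℂ] H) (n : ℕ),
      T ∘L Tinv = 1 ∧ Tinv ∘L T = 1 ∧ ‖T‖ ≤ R ∧ ‖Tinv‖ ≤ R ∧ 1 ≤ n ∧
      (IsGreatest ((fun z : ℂ => ‖z ^ n + z⁻¹ ^ n‖) '' annulus R)
        (R ^ n + R⁻¹ ^ n)) ∧
      K * (R ^ n + R⁻¹ ^ n) < ‖T ^ n + Tinv ^ n‖ := by
  have hR0 : (0:ℝ) < R := by linarith
  have h2K : (0:ℝ) < 2 - K := by linarith
  obtain ⟨m0, hm0⟩ : ∃ m : ℕ, K / (2 - K) < R ^ m := pow_unbounded_of_one_lt _ hR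
  set n := max m0 1 with hn
  have hn1 : 1 ≤ n := le_max_right _ _
  have hRmn : R ^ m0 ≤ R ^ n := pow_le_pow_right₀ (by linarith) (le_max_left _ _)
  have hKn : K < (2 - K) * R ^ n := by
    have : K / (2 - K) < R ^ n := lt_of_lt_of_le hm0 hRmn
    rw [div_lt_iff₀ h2K] at this; linarith
  haveI : NeZero (2 * n) := ⟨by omega⟩
  set N := 2 * n with hN
  set T := shiftCLM N (-1) (fun j => wgt R n (j - 1)) with hT
  set Tinv := shiftCLM N 1 (fun j => (wgt R n j)⁻¹) with hTi
  set e0 : EuclideanSpace ℂ (ZMod N) := EuclideanSpace.single (0 : ZMod N) 1 with he0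
  -- powers acting on e0
  have hwR : ∀ m : ℕ, m < n → wgt R n ((m : ℕ) : ZMod N) = (R : ℂ) := by
    intro m hm
    unfold wgt
    rw [if_pos]
    rw [ZMod.val_natCast_of_lt (by omega)]
    exact hm
  have hTpow : ∀ m : ℕ, m ≤ n → (T ^ m) e0
      = EuclideanSpace.single ((m : ℕ) : ZMod N) ((R : ℂ) ^ m) := by
    intro m
    induction m with
    | zero => intro _; simp [he0]
    | succ m ih =>
      intro hm
      rw [pow_succ', ContinuousLinearMap.mul_apply, ih (by omega), hT, shiftCLM_single]
      have h1 : ((m : ℕ) : ZMod N) - (-1) = (((m + 1 : ℕ)) : ZMod N) := by push_cast; ring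
      rw [h1]
      have h2 : (((m + 1 : ℕ)) : ZMod N) - 1 = ((m : ℕ) : ZMod N) := by push_cast; ring
      rw [h2, hwR m (by omega), pow_succ]
      ring_nf
  have hwRinv : ∀ m : ℕ, 1 ≤ m → m ≤ n → (wgt R n (-((m : ℕ) : ZMod N)))⁻¹ = (R : ℂ) := by
    intro m hm1 hmn
    have hval : ((m : ℕ) : ZMod N).val = m := ZMod.val_natCast_of_lt (by omega)
    have hne : ((m : ℕ) : ZMod N) ≠ 0 := by
      intro h
      have := congrArg ZMod.val h
      rw [hval, ZMod.val_zero] at this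
      omega
    have hnegval : (-((m : ℕ) : ZMod N)).val = N - m := by
      rw [ZMod.neg_val, if_neg hne, hval]
    unfold wgt
    rw [if_neg (by rw [hnegval]; omega), inv_inv]
  have hTinvpow : ∀ m : ℕ, m ≤ n → (Tinv ^ m) e0
      = EuclideanSpace.single (-((m : ℕ) : ZMod N)) ((R : ℂ) ^ m) := by
    intro m
    induction m with
    | zero => intro _; simp [he0]
    | succ m ih =>
      intro hm
      rw [pow_succ', ContinuousLinearMap.mul_apply, ih (by omega), hTi, shiftCLM_single]
      have h1 : -((m : ℕ) : ZMod N) - 1 = -(((m + 1 : ℕ)) : ZMod N) := by push_cast; ring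
      rw [h1, hwRinv (m+1) (by omega) (by omega), pow_succ]
      ring_nf
  -- the two compositions are the identity
  have hcomp1 : T ∘L Tinv = 1 := by
    ext x j
    rw [ContinuousLinearMap.comp_apply, ContinuousLinearMap.one_apply, hT, hTi,
      shiftCLM_apply, shiftCLM_apply]
    have h1 : j + -1 = j - 1 := by ring
    have h2 : j - 1 + 1 = j := by ring
    rw [h1, h2, ← mul_assoc, mul_inv_cancel₀ (wgt_ne_zero R hR n _), one_mul]
  have hcomp2 : Tinv ∘L T = 1 := by
    ext x j
    rw [ContinuousLinearMap.comp_apply, ContinuousLinearMap.one_apply, hT, hTi,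
      shiftCLM_apply, shiftCLM_apply]
    have h2 : j + 1 + -1 = j := by ring
    have h3 : j + 1 - 1 = j := by ring
    rw [h2, h3, ← mul_assoc, inv_mul_cancel₀ (wgt_ne_zero R hR n _), one_mul]
  -- norm bounds
  have hTnorm : ‖T‖ ≤ R :=
    shiftCLM_norm_le N (-1) _ R (by linarith) (fun j => wgt_norm_le R hR n _)
  have hTinvnorm : ‖Tinv‖ ≤ R :=
    shiftCLM_norm_le N 1 _ R (by linarith) (fun j => wgt_inv_norm_le R hR n _)
  -- lower bound for the norm of T^n + Tinv^n
  have hneg : -((n : ℕ) : ZMod N) = ((n : ℕ) : ZMod N) := by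
    have hzero : ((n : ℕ) : ZMod N) + ((n : ℕ) : ZMod N) = 0 := by
      rw [← Nat.cast_add]
      have : (n + n : ℕ) = N := by omega
      rw [this, hN]
      exact ZMod.natCast_self _
    exact neg_eq_of_add_eq_zero_left hzero
  have hAe0 : (T ^ n + Tinv ^ n) e0
      = EuclideanSpace.single ((n : ℕ) : ZMod N) ((2 * R ^ n : ℝ) : ℂ) := by
    rw [ContinuousLinearMap.add_apply, hTpow n le_rfl, hTinvpow n le_rfl, hneg]
    ext j
    simp only [PiLp.add_apply, EuclideanSpace.single_apply]
    split_ifs <;> push_cast <;> ring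
  have hnorm_ge : 2 * R ^ n ≤ ‖T ^ n + Tinv ^ n‖ := by
    have h1 : ‖e0‖ = 1 := by rw [he0, EuclideanSpace.norm_single, norm_one]
    have h2 := (T ^ n + Tinv ^ n).le_opNorm e0
    rw [h1, mul_one, hAe0, EuclideanSpace.norm_single, Complex.norm_real,
      Real.norm_eq_abs, abs_of_pos (by positivity)] at h2
    exact h2
  -- final inequality
  have hfin : K * (R ^ n + R⁻¹ ^ n) < 2 * R ^ n := by
    have hpos : (0:ℝ) < R⁻¹ ^ n := by positivity
    have hle1 : R⁻¹ ^ n ≤ 1 := pow_le_one₀ (by positivity) (by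
      rw [inv_le_one_iff₀]; right; linarith)
    have h1Rn : (1:ℝ) ≤ R ^ n := one_le_pow₀ (by linarith)
    rcases le_or_gt K 0 with h | h
    · nlinarith
    · nlinarith
  -- IsGreatest
  have hgreat : IsGreatest ((fun z : ℂ => ‖z ^ n + z⁻¹ ^ n‖) '' annulus R)
      (R ^ n + R⁻¹ ^ n) := by
    constructor
    · refine ⟨(R : ℂ), ?_, ?_⟩
      · constructor
        · rw [Complex.norm_real, Real.norm_eq_abs, abs_of_pos hR0, div_le_iff₀ hR0]
          nlinarith
        · rw [Complex.norm_real, Real.norm_eq_abs, abs_of_pos hR0]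
      · have hcast : (R : ℂ) ^ n + ((R : ℂ))⁻¹ ^ n = (((R ^ n + R⁻¹ ^ n : ℝ)) : ℂ) := by
          push_cast; ring
        simp only [hcast, Complex.norm_real, Real.norm_eq_abs]
        exact abs_of_pos (by positivity)
    · rintro y ⟨z, ⟨hz1, hz2⟩, rfl⟩
      simp only
      set t := ‖z‖ with ht
      have ht0 : 0 < t := lt_of_lt_of_le (by positivity) hz1
      have habs : ‖z ^ n + z⁻¹ ^ n‖ ≤ t ^ n + t⁻¹ ^ n := by
        calc ‖z ^ n + z⁻¹ ^ n‖
            ≤ ‖z ^ n‖ + ‖z⁻¹ ^ n‖ := norm_add_le _ _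
          _ = t ^ n + t⁻¹ ^ n := by rw [norm_pow, norm_pow, norm_inv]
      refine le_trans habs ?_
      have h1 : t ^ n ≤ R ^ n := pow_le_pow_left₀ ht0.le hz2 n
      have h2 : (1:ℝ) ≤ t ^ n * R ^ n := by
        have htR : (1:ℝ) ≤ t * R := by
          rw [div_le_iff₀ hR0] at hz1; linarith
        calc (1:ℝ) = 1 ^ n := (one_pow n).symm
          _ ≤ (t * R) ^ n := pow_le_pow_left₀ (by norm_num) htR n
          _ = t ^ n * R ^ n := mul_pow t R n
      rw [inv_pow, inv_pow]
      set a := t ^ n with ha'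
      set b := R ^ n with hb'
      have ha : 0 < a := by positivity
      have hb : 0 < b := by positivity
      rw [← sub_nonneg]
      have key : b + b⁻¹ - (a + a⁻¹) = (b - a) * (a * b - 1) / (a * b) := by
        field_simp; ring
      rw [key]
      exact div_nonneg (mul_nonneg (by linarith) (by linarith)) (by positivity)
  exact ⟨EuclideanSpace ℂ (ZMod N), inferInstance, inferInstance, inferInstance,
    T, Tinv, n, hcomp1, hcomp2, hTnorm, hTinvnorm, hn1, hgreat, lt_of_lt_of_le hfin hnorm_ge⟩
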